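/- Let $h, u, v, w$ be formal variables and define the formal power series $\mathcal{Z} = \frac{1}{(1-hu)^2 + h^2vw\,t}\exp\left(\frac{v\,a + w\,b}{(1-hu)^2+h^2vw\,t}\right)$ in $\mathbb{Q}[a,b,t][[h,u,v,w]]$. Then the coefficient of $h^{2p'}u^{2p}v^{m+(p'-p)}w^{n+(p'-p)}$ in $\mathcal{Z}$, for integers $p' \ge p \ge 0$, $m,n \ge 0$, equals $\sum_{\beta=0}^{p}\frac{(-1)^{p'-p+\beta}\,2^{2p-2\beta}\,(m+n+p'+p-\beta)!}{(m+n)!\,m!\,n!\,(2p-2\beta)!\,\beta!\,(p'-p)!}\; a^m\,b^n\,t^{p'-p}$. -/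

import Mathlib

open Finset

/-- Coefficient ring `ℚ[a,b,t]`, with `a = X 0`, `b = X 1`, `t = X 2`. -/
abbrev Coeffs : Type := MvPolynomial (Fin 3) ℚ

/-- Formal power series ring in the variables `h = X 0, u = X 1, v = X 2, w = X 3`. -/
abbrev PS : Type := MvPowerSeries (Fin 4) Coeffs

/-- `D = (1 - hu)² + h²vw·t`. -/
noncomputable def D : PS :=
  (1 - MvPowerSeries.X 0 * MvPowerSeries.X 1) ^ 2 +
    MvPowerSeries.X 0 ^ 2 * MvPowerSeries.X 2 * MvPowerSeries.X 3 *
      MvPowerSeries.C (σ := Fin 4) (R := Coeffs) (MvPolynomial.X 2)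

/-- The inverse of `D` (whose constant coefficient is `1`). -/
noncomputable def Dinv : PS := MvPowerSeries.invOfUnit D 1

/-- `E = v·a + w·b`. -/
noncomputable def E : PS :=
  MvPowerSeries.X 2 * MvPowerSeries.C (σ := Fin 4) (R := Coeffs) (MvPolynomial.X 0) +
    MvPowerSeries.X 3 * MvPowerSeries.C (σ := Fin 4) (R := Coeffs) (MvPolynomial.X 1)

/-- Exponential of a power series with zero constant term: since `E * Dinv` has zero
constant term, the coefficient of `(E * Dinv)^μ` at a multidegree of total degree `< μ`
vanishes, so the exponential series truncates coefficientwise. -/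
noncomputable def expEoverD : PS :=
  fun d =>
    ∑ μ ∈ Finset.range (d.sum (fun _ k => k) + 1),
      ((Nat.factorial μ : ℚ)⁻¹) • MvPowerSeries.coeff (σ := Fin 4) (R := Coeffs) d ((E * Dinv) ^ μ)

/-- `Z = D⁻¹ · exp(E/D)`. -/
noncomputable def Z : PS := Dinv * expEoverD

----- auxiliary development -----
namespace Aux

open MvPowerSeries

/-- exponent finsupp with given degrees in h,u,v,w -/
noncomputable def dg (a b c d : ℕ) : Fin 4 →₀ ℕ :=
  Finsupp.single 0 a + Finsupp.single 1 b + Finsupp.single 2 c + Finsupp.single 3 d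

lemma dg_apply (a b c d : ℕ) :
    dg a b c d 0 = a ∧ dg a b c d 1 = b ∧ dg a b c d 2 = c ∧ dg a b c d 3 = d := by
  simp [dg, Finsupp.single_apply]

lemma dg_eq_iff {a b c d a' b' c' d' : ℕ} :
    dg a b c d = dg a' b' c' d' ↔ a = a' ∧ b = b' ∧ c = c' ∧ d = d' := by
  constructor
  · intro h
    obtain ⟨h0, h1, h2, h3⟩ := dg_apply a b c d
    obtain ⟨g0, g1, g2, g3⟩ := dg_apply a' b' c' d'
    exact ⟨by rw [← h0, ← g0, h], by rw [← h1, ← g1, h], by rw [← h2, ← g2, h],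
      by rw [← h3, ← g3, h]⟩
  · rintro ⟨rfl, rfl, rfl, rfl⟩; rfl

lemma dg_add (a b c d a' b' c' d' : ℕ) :
    dg a b c d + dg a' b' c' d' = dg (a+a') (b+b') (c+c') (d+d') := by
  simp only [dg, Finsupp.single_add]
  abel

lemma dg_le_iff {a b c d a' b' c' d' : ℕ} :
    dg a b c d ≤ dg a' b' c' d' ↔ a ≤ a' ∧ b ≤ b' ∧ c ≤ c' ∧ d ≤ d' := by
  obtain ⟨h0, h1, h2, h3⟩ := dg_apply a b c d
  obtain ⟨g0, g1, g2, g3⟩ := dg_apply a' b' c' d'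
  rw [Finsupp.le_def]
  constructor
  · intro h
    exact ⟨h0 ▸ g0 ▸ h 0, h1 ▸ g1 ▸ h 1, h2 ▸ g2 ▸ h 2, h3 ▸ g3 ▸ h 3⟩
  · rintro ⟨ha, hb, hc, hd⟩ i
    fin_cases i <;> simp only [Fin.mk_zero, Fin.mk_one, Fin.isValue]
    · rw [h0, g0]; exact ha
    · rw [h1, g1]; exact hb
    · show dg a b c d 2 ≤ dg a' b' c' d' 2
      rw [h2, g2]; exact hc
    · show dg a b c d 3 ≤ dg a' b' c' d' 3
      rw [h3, g3]; exact hd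

lemma dg_sub (a b c d a' b' c' d' : ℕ) :
    dg a b c d - dg a' b' c' d' = dg (a-a') (b-b') (c-c') (d-d') := by
  ext i
  rw [Finsupp.tsub_apply]
  fin_cases i <;>
    simp [dg, Finsupp.single_apply]

lemma degree_eq (d : Fin 4 →₀ ℕ) : Finsupp.degree d = d 0 + d 1 + d 2 + d 3 := by
  rw [Finsupp.degree, ← Fin.sum_univ_four (fun i => d i)]
  apply Finset.sum_subset (Finset.subset_univ _)
  intro x _ hx
  simpa using hx

lemma degree_dg (a b c d : ℕ) : Finsupp.degree (dg a b c d) = a + b + c + d := by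
  obtain ⟨h0, h1, h2, h3⟩ := dg_apply a b c d
  rw [degree_eq, h0, h1, h2, h3]

lemma fsum_eq_degree (d : Fin 4 →₀ ℕ) : d.sum (fun _ k => k) = Finsupp.degree d := rfl

end Aux

namespace Aux
open MvPowerSeries

lemma dg_zero : dg 0 0 0 0 = 0 := by simp [dg]

noncomputable def t0 : Coeffs := MvPolynomial.X 2

lemma monomial_eq (a b c d : ℕ) (r : Coeffs) :
    monomial (σ := Fin 4) (R := Coeffs) (dg a b c d) r =
      C (σ := Fin 4) (R := Coeffs) r * X 0 ^ a * X 1 ^ b * X 2 ^ c * X 3 ^ d := by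
  rw [X_pow_eq, X_pow_eq, X_pow_eq, X_pow_eq, show (C (σ := Fin 4) (R := Coeffs) r : PS) = monomial (σ := Fin 4) (R := Coeffs) 0 r from rfl,
    monomial_mul_monomial, monomial_mul_monomial, monomial_mul_monomial, monomial_mul_monomial]
  simp only [mul_one]
  congr 1
  simp [dg, add_assoc]

noncomputable def Y : PS :=
  monomial (σ := Fin 4) (R := Coeffs) (dg 1 1 0 0) 2 + monomial (σ := Fin 4) (R := Coeffs) (dg 2 2 0 0) (-1) +
    monomial (σ := Fin 4) (R := Coeffs) (dg 2 0 1 1) (-t0)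

lemma D_eq : D = 1 - Y := by
  rw [Y, D, monomial_eq, monomial_eq, monomial_eq, t0]
  simp only [map_neg, map_one, map_ofNat, pow_zero, pow_one, mul_one, one_mul]
  ring

lemma coeff_dg_monomial (a b c d a' b' c' d' : ℕ) (r : Coeffs) :
    coeff (σ := Fin 4) (R := Coeffs) (dg a b c d) (monomial (σ := Fin 4) (R := Coeffs) (dg a' b' c' d') r) =
      if a = a' ∧ b = b' ∧ c = c' ∧ d = d' then r else 0 := by
  rw [coeff_monomial]
  by_cases h : dg a b c d = dg a' b' c' d'
  · rw [if_pos h, if_pos (dg_eq_iff.mp h)]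
  · rw [if_neg h, if_neg (fun hc => h (dg_eq_iff.mpr hc))]

lemma constantCoeff_Y : constantCoeff (σ := Fin 4) (R := Coeffs) Y = 0 := by
  have h0 : constantCoeff (σ := Fin 4) (R := Coeffs) Y = coeff (σ := Fin 4) (R := Coeffs) (dg 0 0 0 0) Y := by
    rw [dg_zero, coeff_zero_eq_constantCoeff]
  rw [h0, Y, map_add, map_add, coeff_dg_monomial, coeff_dg_monomial, coeff_dg_monomial]
  norm_num

lemma constantCoeff_D : constantCoeff (σ := Fin 4) (R := Coeffs) D = 1 := by
  rw [D_eq, map_sub, map_one, constantCoeff_Y, sub_zero]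

lemma constantCoeff_E : constantCoeff (σ := Fin 4) (R := Coeffs) E = 0 := by
  rw [E, map_add, map_mul, map_mul, constantCoeff_X, zero_mul, constantCoeff_X, zero_mul,
    add_zero]

/-- vanishing of coefficients of high powers -/
lemma coeff_pow_eq_zero {φ : PS} (hφ : constantCoeff (σ := Fin 4) (R := Coeffs) φ = 0)
    {d : Fin 4 →₀ ℕ} {ν : ℕ} (hd : Finsupp.degree d < ν) :
    coeff (σ := Fin 4) (R := Coeffs) d (φ ^ ν) = 0 :=
  coeff_eq_zero_of_constantCoeff_nilpotent (by rw [pow_one, hφ]) (by omega)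

end Aux

namespace Aux
open MvPowerSeries

lemma degree_add' (e f : Fin 4 →₀ ℕ) :
    Finsupp.degree (e + f) = Finsupp.degree e + Finsupp.degree f := by
  rw [degree_eq, degree_eq, degree_eq]
  simp only [Finsupp.add_apply]
  ring

lemma hockey (μ ν : ℕ) : ∑ j ∈ range (ν + 1), (μ + j).choose j = (μ + 1 + ν).choose ν := by
  have h1 : ∀ j, (μ + j).choose j = (μ + j).choose μ := by
    intro j
    have := Nat.choose_symm (n := μ + j) (k := μ) (Nat.le_add_right _ _)
    rw [Nat.add_sub_cancel_left] at this
    exact this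
  simp only [h1]
  have h2 : ∑ j ∈ range (ν + 1), (μ + j).choose μ = ∑ x ∈ Finset.Icc μ (μ + ν), x.choose μ := by
    rw [← Finset.Ico_add_one_right_eq_Icc, Finset.sum_Ico_eq_sum_range,
      show μ + ν + 1 - μ = ν + 1 by omega]
  rw [h2, Nat.sum_Icc_choose]
  have h3 := Nat.choose_symm (n := μ + ν + 1) (k := ν) (by omega)
  rw [show μ + ν + 1 - ν = μ + 1 by omega] at h3
  rw [show μ + 1 + ν = μ + ν + 1 by omega]
  exact h3

lemma sum_mul_shift (N : ℕ) (c g : ℕ → Coeffs) (hg : ∀ ν, N ≤ ν → g ν = 0) :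
    ∑ i ∈ range N, ∑ j ∈ range N, c j * g (i + j) =
      ∑ ν ∈ range N, (∑ j ∈ range (ν + 1), c j) * g ν := by
  rw [Finset.sum_comm]
  have h1 : ∀ j ∈ range N, ∑ i ∈ range N, c j * g (i + j) = ∑ ν ∈ Finset.Ico j N, c j * g ν := by
    intro j hj
    rw [Finset.mem_range] at hj
    rw [Finset.sum_Ico_eq_sum_range]
    rw [show ∑ i ∈ range N, c j * g (i + j) = ∑ i ∈ range N, c j * g (j + i) by
      apply Finset.sum_congr rfl; intro i _; rw [add_comm i j]]
    symm
    apply Finset.sum_subset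
    · intro x hx
      rw [Finset.mem_range] at hx ⊢
      omega
    · intro x _ hx
      rw [Finset.mem_range] at hx
      rw [hg (j + x) (by omega), mul_zero]
  rw [Finset.sum_congr rfl h1]
  rw [Finset.range_eq_Ico, Finset.sum_Ico_Ico_comm]
  apply Finset.sum_congr rfl
  intro ν _
  rw [Finset.sum_mul, Finset.range_eq_Ico]

/-- the series `∑_ν (μ+ν choose ν) Y^ν`, i.e. `Dinv^(μ+1)`. -/
noncomputable def geo (μ : ℕ) : PS :=
  fun e => ∑ ν ∈ range (Finsupp.degree e + 1),
    ((μ + ν).choose ν : Coeffs) * coeff (σ := Fin 4) (R := Coeffs) e (Y ^ ν)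

lemma coeff_geo (μ : ℕ) (d : Fin 4 →₀ ℕ) (N : ℕ) (hN : Finsupp.degree d < N) :
    coeff (σ := Fin 4) (R := Coeffs) d (geo μ) =
      ∑ ν ∈ range N, ((μ + ν).choose ν : Coeffs) * coeff (σ := Fin 4) (R := Coeffs) d (Y ^ ν) := by
  rw [coeff_apply, geo]
  apply Finset.sum_subset
  · intro x hx
    rw [Finset.mem_range] at hx ⊢
    omega
  · intro x _ hx
    rw [Finset.mem_range] at hx
    rw [coeff_pow_eq_zero constantCoeff_Y (by omega), mul_zero]

end Aux

namespace Aux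
open MvPowerSeries

lemma degree_fst_le {x : (Fin 4 →₀ ℕ) × (Fin 4 →₀ ℕ)} {d : Fin 4 →₀ ℕ}
    (hx : x ∈ HasAntidiagonal.antidiagonal d) :
    Finsupp.degree x.1 ≤ Finsupp.degree d ∧ Finsupp.degree x.2 ≤ Finsupp.degree d := by
  rw [Finset.HasAntidiagonal.mem_antidiagonal] at hx
  rw [← hx, degree_add' x.1 x.2]
  omega

lemma D_mul_geo : D * geo 0 = 1 := by
  ext1 d
  set N := Finsupp.degree d + 1 with hNdef
  have hN : Finsupp.degree d < N := by omega
  have hgeo : ∀ x ∈ HasAntidiagonal.antidiagonal d,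
      coeff (σ := Fin 4) (R := Coeffs) x.2 (geo 0) = ∑ ν ∈ range N, coeff (σ := Fin 4) (R := Coeffs) x.2 (Y ^ ν) := by
    intro x hx
    rw [coeff_geo 0 x.2 N (by have := (degree_fst_le hx).2; omega)]
    simp [Nat.choose_self]
  have hY : coeff (σ := Fin 4) (R := Coeffs) d (Y * geo 0) = ∑ ν ∈ range N, coeff (σ := Fin 4) (R := Coeffs) d (Y ^ (ν + 1)) := by
    rw [coeff_mul]
    rw [Finset.sum_congr rfl (fun x hx => by rw [hgeo x hx, Finset.mul_sum])]
    rw [Finset.sum_comm]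
    apply Finset.sum_congr rfl
    intro ν _
    rw [pow_succ', coeff_mul]
  have hD : D * geo 0 = geo 0 - Y * geo 0 := by rw [D_eq]; ring
  rw [hD, map_sub, hY, coeff_geo 0 d N hN]
  simp only [zero_add, Nat.choose_self, Nat.cast_one, one_mul]
  rw [← Finset.sum_sub_distrib]
  rw [Finset.sum_range_sub' (fun ν => coeff (σ := Fin 4) (R := Coeffs) d (Y ^ ν)) N]
  rw [pow_zero, coeff_pow_eq_zero constantCoeff_Y (by omega), sub_zero]

lemma geo_mul (μ : ℕ) : geo 0 * geo μ = geo (μ + 1) := by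
  refine MvPowerSeries.ext fun d => ?_
  set N := Finsupp.degree d + 1 with hNdef
  have hN : Finsupp.degree d < N := by omega
  rw [coeff_mul]
  have step : ∀ x ∈ HasAntidiagonal.antidiagonal d,
      coeff (σ := Fin 4) (R := Coeffs) x.1 (geo 0) * coeff (σ := Fin 4) (R := Coeffs) x.2 (geo μ) =
        ∑ i ∈ range N, ∑ j ∈ range N,
          ((μ + j).choose j : Coeffs) * (coeff (σ := Fin 4) (R := Coeffs) x.1 (Y ^ i) * coeff (σ := Fin 4) (R := Coeffs) x.2 (Y ^ j)) := by
    intro x hx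
    obtain ⟨h1, h2⟩ := degree_fst_le hx
    rw [coeff_geo 0 x.1 N (by omega), coeff_geo μ x.2 N (by omega)]
    rw [Finset.sum_mul_sum]
    apply Finset.sum_congr rfl; intro i _
    apply Finset.sum_congr rfl; intro j _
    simp only [zero_add, Nat.choose_self, Nat.cast_one, one_mul]
    ring
  rw [Finset.sum_congr rfl step]
  rw [Finset.sum_comm]
  have step2 : ∀ i ∈ range N,
      ∑ x ∈ HasAntidiagonal.antidiagonal d, ∑ j ∈ range N,
          ((μ + j).choose j : Coeffs) * (coeff (σ := Fin 4) (R := Coeffs) x.1 (Y ^ i) * coeff (σ := Fin 4) (R := Coeffs) x.2 (Y ^ j)) =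
        ∑ j ∈ range N, ((μ + j).choose j : Coeffs) * coeff (σ := Fin 4) (R := Coeffs) d (Y ^ (i + j)) := by
    intro i _
    rw [Finset.sum_comm]
    apply Finset.sum_congr rfl
    intro j _
    rw [← Finset.mul_sum, ← coeff_mul, ← pow_add]
  rw [Finset.sum_congr rfl step2]
  rw [sum_mul_shift N (fun j => ((μ + j).choose j : Coeffs))
    (fun ν => coeff (σ := Fin 4) (R := Coeffs) d (Y ^ ν))
    (fun ν hν => coeff_pow_eq_zero constantCoeff_Y (by omega))]
  rw [coeff_geo (μ + 1) d N hN]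
  apply Finset.sum_congr rfl
  intro ν _
  congr 1
  rw [← Nat.cast_sum, hockey μ ν]

lemma geo_zero_eq_Dinv : geo 0 = Dinv := by
  have h1 : D * Dinv = 1 := mul_invOfUnit D 1 (by rw [constantCoeff_D]; rfl)
  calc geo 0 = geo 0 * (D * Dinv) := by rw [h1, mul_one]
    _ = (D * geo 0) * Dinv := by ring
    _ = Dinv := by rw [D_mul_geo, one_mul]

lemma Dinv_pow (μ : ℕ) : Dinv ^ (μ + 1) = geo μ := by
  induction μ with
  | zero => rw [pow_one, geo_zero_eq_Dinv]
  | succ k ih => rw [pow_succ, ih, mul_comm, ← geo_zero_eq_Dinv, geo_mul]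

end Aux

namespace Aux
open MvPowerSeries

lemma coeff_Z (d : Fin 4 →₀ ℕ) :
    coeff (σ := Fin 4) (R := Coeffs) d Z =
      ∑ μ ∈ range (Finsupp.degree d + 1),
        ((μ.factorial : ℚ)⁻¹) • coeff (σ := Fin 4) (R := Coeffs) d (E ^ μ * geo μ) := by
  set N := Finsupp.degree d + 1 with hNdef
  have hED : constantCoeff (σ := Fin 4) (R := Coeffs) (E * Dinv) = 0 := by
    rw [map_mul, constantCoeff_E, zero_mul]
  have hexp : ∀ x ∈ HasAntidiagonal.antidiagonal d,
      coeff (σ := Fin 4) (R := Coeffs) x.1 Dinv * coeff (σ := Fin 4) (R := Coeffs) x.2 expEoverD =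
        ∑ μ ∈ range N, ((μ.factorial : ℚ)⁻¹) •
          (coeff (σ := Fin 4) (R := Coeffs) x.1 Dinv * coeff (σ := Fin 4) (R := Coeffs) x.2 ((E * Dinv) ^ μ)) := by
    intro x hx
    have h2 : coeff (σ := Fin 4) (R := Coeffs) x.2 expEoverD =
        ∑ μ ∈ range N, ((μ.factorial : ℚ)⁻¹) • coeff (σ := Fin 4) (R := Coeffs) x.2 ((E * Dinv) ^ μ) := by
      rw [coeff_apply]
      show ∑ μ ∈ range (x.2.sum (fun _ k => k) + 1), _ = _
      rw [fsum_eq_degree]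
      apply Finset.sum_subset
      · intro y hy
        rw [Finset.mem_range] at hy ⊢
        have := (degree_fst_le hx).2
        omega
      · intro y _ hy
        rw [Finset.mem_range] at hy
        rw [coeff_pow_eq_zero hED (by omega), smul_zero]
    rw [h2, Finset.mul_sum]
    apply Finset.sum_congr rfl
    intro μ _
    rw [mul_smul_comm]
  rw [Z, coeff_mul, Finset.sum_congr rfl hexp, Finset.sum_comm]
  apply Finset.sum_congr rfl
  intro μ _
  rw [← Finset.smul_sum, ← coeff_mul]
  have h3 : Dinv * (E * Dinv) ^ μ = E ^ μ * Dinv ^ (μ + 1) := by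
    rw [mul_pow, pow_succ]; ring
  rw [h3, Dinv_pow]

end Aux

namespace Aux
open MvPowerSeries

lemma monomial_dg_pow (a b c d : ℕ) (r : Coeffs) (n : ℕ) :
    (monomial (σ := Fin 4) (R := Coeffs) (dg a b c d) r) ^ n =
      monomial (σ := Fin 4) (R := Coeffs) (dg (n*a) (n*b) (n*c) (n*d)) (r ^ n) := by
  induction n with
  | zero =>
    simp only [pow_zero, Nat.zero_mul]
    rw [dg_zero]
    rfl
  | succ k ih =>
    rw [pow_succ, ih, monomial_mul_monomial, dg_add, pow_succ]
    congr 1 <;> ring_nf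

lemma natCast_eq_monomial (n : ℕ) : ((n : ℕ) : PS) = monomial (σ := Fin 4) (R := Coeffs) (dg 0 0 0 0) (n : Coeffs) := by
  rw [dg_zero]
  rw [show ((n : ℕ) : PS) = C (σ := Fin 4) (R := Coeffs) (n : Coeffs) from (map_natCast (C (σ := Fin 4) (R := Coeffs)) n).symm]
  rfl

lemma term_eq (ν k j : ℕ) :
    (monomial (σ := Fin 4) (R := Coeffs) (dg 1 1 0 0) (2:Coeffs))^j * (monomial (σ := Fin 4) (R := Coeffs) (dg 2 2 0 0) (-1:Coeffs))^(k-j)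
        * ((k.choose j : ℕ) : PS) * ((monomial (σ := Fin 4) (R := Coeffs) (dg 2 0 1 1) (-t0))^(ν-k)
        * ((ν.choose k : ℕ) : PS))
      = monomial (σ := Fin 4) (R := Coeffs) (dg (j + 2*(k-j) + 2*(ν-k)) (j + 2*(k-j)) (ν-k) (ν-k))
          ((ν.choose k : Coeffs) * (k.choose j : Coeffs) * 2^j * (-1)^(k-j) * (-t0)^(ν-k)) := by
  rw [monomial_dg_pow, monomial_dg_pow, monomial_dg_pow, natCast_eq_monomial, natCast_eq_monomial,
    monomial_mul_monomial, monomial_mul_monomial, monomial_mul_monomial, monomial_mul_monomial,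
    dg_add, dg_add, dg_add, dg_add]
  refine congrArg₂ (fun (f : Coeffs →ₗ[Coeffs] PS) r => f r) ?_ ?_
  · congr 1
    rw [dg_eq_iff]
    refine ⟨by omega, by omega, by omega, by omega⟩
  · ring

lemma Y_pow_expand (ν : ℕ) :
    Y ^ ν = ∑ k ∈ range (ν + 1), ∑ j ∈ range (k + 1),
      monomial (σ := Fin 4) (R := Coeffs) (dg (j + 2*(k-j) + 2*(ν-k)) (j + 2*(k-j)) (ν-k) (ν-k))
        ((ν.choose k : Coeffs) * (k.choose j : Coeffs) * 2^j * (-1)^(k-j) * (-t0)^(ν-k)) := by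
  rw [Y, add_pow]
  apply Finset.sum_congr rfl
  intro k _
  rw [add_pow, Finset.sum_mul, Finset.sum_mul]
  apply Finset.sum_congr rfl
  intro j _
  rw [mul_assoc]
  exact term_eq ν k j

end Aux

namespace Aux
open MvPowerSeries

lemma coeff_Y_pow (A B C Dd ν : ℕ) :
    coeff (σ := Fin 4) (R := Coeffs) (dg A B C Dd) (Y ^ ν) =
      if Dd = C ∧ A = B + 2*C ∧ ν + C ≤ A ∧ A ≤ 2*ν then
        ((ν.choose (ν - C) : Coeffs) * ((ν - C).choose (2*ν - A) : Coeffs) * 2^(2*ν - A) *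
          (-1)^(A - C - ν) * (-t0)^C)
      else 0 := by
  rw [Y_pow_expand, map_sum]
  have expand : ∀ k, coeff (σ := Fin 4) (R := Coeffs) (dg A B C Dd) (∑ j ∈ range (k + 1),
      monomial (σ := Fin 4) (R := Coeffs) (dg (j + 2*(k-j) + 2*(ν-k)) (j + 2*(k-j)) (ν-k) (ν-k))
        ((ν.choose k : Coeffs) * (k.choose j : Coeffs) * 2^j * (-1)^(k-j) * (-t0)^(ν-k))) =
      ∑ j ∈ range (k + 1),
        if A = j + 2*(k-j) + 2*(ν-k) ∧ B = j + 2*(k-j) ∧ C = ν-k ∧ Dd = ν-k then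
          ((ν.choose k : Coeffs) * (k.choose j : Coeffs) * 2^j * (-1)^(k-j) * (-t0)^(ν-k))
        else 0 := by
    intro k
    rw [map_sum]
    apply Finset.sum_congr rfl
    intro j _
    rw [coeff_dg_monomial]
  rw [Finset.sum_congr rfl (fun k _ => expand k)]
  by_cases H : Dd = C ∧ A = B + 2*C ∧ ν + C ≤ A ∧ A ≤ 2*ν
  · obtain ⟨h1, h2, h3, h4⟩ := H
    have hCν : C ≤ ν := by omega
    rw [if_pos ⟨h1, h2, h3, h4⟩]
    rw [Finset.sum_eq_single_of_mem (ν - C) (Finset.mem_range.mpr (by omega))]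
    · rw [Finset.sum_eq_single_of_mem (2*ν - A) (Finset.mem_range.mpr (by omega))]
      · rw [if_pos ⟨by omega, by omega, by omega, by omega⟩,
          show ν - (ν - C) = C by omega, show (ν - C) - (2*ν - A) = A - C - ν by omega]
      · intro j hj hne
        rw [Finset.mem_range] at hj
        rw [if_neg]
        rintro ⟨e1, e2, e3, e4⟩
        omega
    · intro k hk hne
      rw [Finset.mem_range] at hk
      apply Finset.sum_eq_zero
      intro j hj
      rw [Finset.mem_range] at hj
      rw [if_neg]
      rintro ⟨e1, e2, e3, e4⟩
      omega
  · rw [if_neg H]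
    apply Finset.sum_eq_zero
    intro k hk
    rw [Finset.mem_range] at hk
    apply Finset.sum_eq_zero
    intro j hj
    rw [Finset.mem_range] at hj
    rw [if_neg]
    rintro ⟨e1, e2, e3, e4⟩
    exact H ⟨by omega, by omega, by omega, by omega⟩

end Aux

namespace Aux
open MvPowerSeries

noncomputable def a0 : Coeffs := MvPolynomial.X 0
noncomputable def b0 : Coeffs := MvPolynomial.X 1

lemma E_eq : E = monomial (σ := Fin 4) (R := Coeffs) (dg 0 0 1 0) a0 + monomial (σ := Fin 4) (R := Coeffs) (dg 0 0 0 1) b0 := by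
  rw [E, monomial_eq, monomial_eq, a0, b0]
  simp only [pow_zero, pow_one, one_mul, mul_one]
  ring

lemma E_pow (μ : ℕ) :
    E ^ μ = ∑ α ∈ range (μ + 1),
      monomial (σ := Fin 4) (R := Coeffs) (dg 0 0 α (μ - α)) ((μ.choose α : Coeffs) * a0^α * b0^(μ-α)) := by
  rw [E_eq, add_pow]
  apply Finset.sum_congr rfl
  intro α _
  rw [monomial_dg_pow, monomial_dg_pow, natCast_eq_monomial,
    monomial_mul_monomial, monomial_mul_monomial, dg_add, dg_add]
  congr 1
  · congr 1
    rw [dg_eq_iff]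
    refine ⟨by omega, by omega, by omega, by omega⟩
  · ring

lemma degree_sub_le (e f : Fin 4 →₀ ℕ) : Finsupp.degree (e - f) ≤ Finsupp.degree e := by
  rw [degree_eq, degree_eq]
  simp only [Finsupp.tsub_apply]
  omega

end Aux

namespace Aux
open MvPowerSeries

lemma coeff_Emu_geo (p q m n μ : ℕ) :
    coeff (σ := Fin 4) (R := Coeffs) (dg (2*(p+q)) (2*p) (m+q) (n+q)) (E ^ μ * geo μ) =
      if μ = m + n then
        ((m+n).choose m : Coeffs) * a0^m * b0^n *
          ∑ β ∈ range (p+1),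
            (((m+n) + (2*p+q-β)).choose (2*p+q-β) : Coeffs) *
            (((2*p+q-β).choose (2*p-β) : Coeffs) * (((2*p-β).choose (2*p-2*β) : Coeffs)) *
              2^(2*p-2*β) * (-1)^β * (-t0)^q)
      else 0 := by
  set d : Fin 4 →₀ ℕ := dg (2*(p+q)) (2*p) (m+q) (n+q) with hd
  set N : ℕ := Finsupp.degree d + 1 with hN
  have hdegd : Finsupp.degree d = 2*(p+q) + 2*p + (m+q) + (n+q) := degree_dg _ _ _ _
  have inner : ∀ α, α ≤ μ → dg 0 0 α (μ-α) ≤ d →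
      coeff (σ := Fin 4) (R := Coeffs) (d - dg 0 0 α (μ-α)) (geo μ) =
        ∑ ν ∈ range N, ((μ + ν).choose ν : Coeffs) *
          (if n+q-(μ-α) = m+q-α ∧ 2*(p+q) = 2*p + 2*(m+q-α) ∧ ν + (m+q-α) ≤ 2*(p+q) ∧
              2*(p+q) ≤ 2*ν then
            (((ν.choose (ν - (m+q-α)) : Coeffs)) * (((ν - (m+q-α)).choose (2*ν - 2*(p+q)) : Coeffs)) *
              2^(2*ν - 2*(p+q)) * (-1)^(2*(p+q) - (m+q-α) - ν) * (-t0)^(m+q-α))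
          else 0) := by
    intro α hαμ hle
    have hsub : d - dg 0 0 α (μ-α) = dg (2*(p+q)) (2*p) (m+q-α) (n+q-(μ-α)) := by
      rw [hd, dg_sub]
      congr 1 <;> omega
    have hdeg2 : Finsupp.degree (d - dg 0 0 α (μ-α)) < N := by
      have h1 := degree_sub_le d (dg 0 0 α (μ-α))
      omega
    rw [hsub] at hdeg2
    rw [hsub, coeff_geo μ _ N hdeg2]
    apply Finset.sum_congr rfl
    intro ν _
    rw [coeff_Y_pow]
  have vanish : ∀ α, α ≤ μ → (α ≠ m ∨ μ ≠ m + n) →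
      (if dg 0 0 α (μ-α) ≤ d then
        (((μ.choose α : Coeffs)) * a0^α * b0^(μ-α)) * coeff (σ := Fin 4) (R := Coeffs) (d - dg 0 0 α (μ-α)) (geo μ)
      else 0) = 0 := by
    intro α hαμ hcase
    by_cases hle : dg 0 0 α (μ-α) ≤ d
    · rw [if_pos hle]
      have hle' := hle
      rw [hd, dg_le_iff] at hle'
      obtain ⟨-, -, hα, hμα⟩ := hle'
      rw [inner α hαμ hle]
      have : ∀ ν ∈ range N, ((μ + ν).choose ν : Coeffs) *
          (if n+q-(μ-α) = m+q-α ∧ 2*(p+q) = 2*p + 2*(m+q-α) ∧ ν + (m+q-α) ≤ 2*(p+q) ∧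
              2*(p+q) ≤ 2*ν then
            (((ν.choose (ν - (m+q-α)) : Coeffs)) * (((ν - (m+q-α)).choose (2*ν - 2*(p+q)) : Coeffs)) *
              2^(2*ν - 2*(p+q)) * (-1)^(2*(p+q) - (m+q-α) - ν) * (-t0)^(m+q-α))
          else 0) = 0 := by
        intro ν _
        rw [if_neg, mul_zero]
        rintro ⟨e1, e2, e3, e4⟩
        rcases hcase with h | h <;> omega
      rw [Finset.sum_congr rfl this, Finset.sum_const_zero, mul_zero]
    · rw [if_neg hle]
  rw [E_pow, Finset.sum_mul, map_sum]
  have expand : ∀ α ∈ range (μ + 1),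
      coeff (σ := Fin 4) (R := Coeffs) d (monomial (σ := Fin 4) (R := Coeffs) (dg 0 0 α (μ - α)) ((μ.choose α : Coeffs) * a0^α * b0^(μ-α))
          * geo μ) =
        (if dg 0 0 α (μ-α) ≤ d then
          (((μ.choose α : Coeffs)) * a0^α * b0^(μ-α)) * coeff (σ := Fin 4) (R := Coeffs) (d - dg 0 0 α (μ-α)) (geo μ)
        else 0) := by
    intro α _
    rw [coeff_monomial_mul]
  rw [Finset.sum_congr rfl expand]
  by_cases hμ : μ = m + n
  · rw [if_pos hμ]
    subst hμ
    rw [Finset.sum_eq_single_of_mem m (Finset.mem_range.mpr (by omega))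
      (fun α hα hne => vanish α (by rw [Finset.mem_range] at hα; omega) (Or.inl hne))]
    have hle : dg 0 0 m (m+n-m) ≤ d := by
      rw [hd, dg_le_iff]
      exact ⟨by omega, by omega, by omega, by omega⟩
    rw [if_pos hle]
    rw [inner m (by omega) hle]
    rw [show m+n-m = n from by omega, show m+q-m = q from by omega,
      show n+q-n = q from by omega]
    congr 1
    have hiff : ∀ ν : ℕ, (q = q ∧ 2*(p+q) = 2*p + 2*q ∧ ν + q ≤ 2*(p+q) ∧ 2*(p+q) ≤ 2*ν)
        ↔ (p+q ≤ ν ∧ ν ≤ 2*p+q) := by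
      intro ν
      constructor
      · rintro ⟨e1, e2, e3, e4⟩; exact ⟨by omega, by omega⟩
      · rintro ⟨e1, e2⟩; exact ⟨rfl, by omega, by omega, by omega⟩
    have hstep : ∀ ν ∈ range N, ((m + n + ν).choose ν : Coeffs) *
          (if q = q ∧ 2*(p+q) = 2*p + 2*q ∧ ν + q ≤ 2*(p+q) ∧ 2*(p+q) ≤ 2*ν then
            (((ν.choose (ν - q) : Coeffs)) * (((ν - q).choose (2*ν - 2*(p+q)) : Coeffs)) *
              2^(2*ν - 2*(p+q)) * (-1)^(2*(p+q) - q - ν) * (-t0)^q)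
          else 0) =
        (if p+q ≤ ν ∧ ν ≤ 2*p+q then ((m + n + ν).choose ν : Coeffs) *
            (((ν.choose (ν - q) : Coeffs)) * (((ν - q).choose (2*ν - 2*(p+q)) : Coeffs)) *
              2^(2*ν - 2*(p+q)) * (-1)^(2*(p+q) - q - ν) * (-t0)^q)
          else 0) := by
      intro ν _
      rw [mul_ite, mul_zero, if_congr (hiff ν) rfl rfl]
    rw [Finset.sum_congr rfl hstep, ← Finset.sum_filter]
    have hfilter : (range N).filter (fun ν => p+q ≤ ν ∧ ν ≤ 2*p+q) =
        Finset.Icc (p+q) (2*p+q) := by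
      ext ν
      simp only [Finset.mem_filter, Finset.mem_range, Finset.mem_Icc]
      omega
    rw [hfilter, ← Finset.Ico_add_one_right_eq_Icc, Finset.sum_Ico_eq_sum_range,
      show 2*p+q+1 - (p+q) = p+1 from by omega, ← Finset.sum_range_reflect]
    apply Finset.sum_congr rfl
    intro β hβ
    rw [Finset.mem_range] at hβ
    rw [show p + q + (p + 1 - 1 - β) = 2*p+q-β from by omega,
      show 2*p+q-β - q = 2*p-β from by omega,
      show 2*(2*p+q-β) - 2*(p+q) = 2*p-2*β from by omega,
      show 2*(p+q) - q - (2*p+q-β) = β from by omega]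
  · rw [if_neg hμ]
    apply Finset.sum_eq_zero
    intro α hα
    exact vanish α (by rw [Finset.mem_range] at hα; omega) (Or.inr hμ)

end Aux

namespace Aux
open MvPowerSeries

lemma chooseID (m n q β P : ℕ) :
    (((m+n).choose m : ℚ) * ((m+n+(q+(β+2*P))).choose (q+(β+2*P)) : ℚ) *
        ((q+(β+2*P)).choose (β+2*P) : ℚ) * ((β+2*P).choose (2*P) : ℚ)) / (m+n).factorial
    = ((m+n+(q+(β+2*P))).factorial : ℚ) /
        (((m+n).factorial : ℚ) * m.factorial * n.factorial * (2*P).factorial * β.factorial *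
          q.factorial) := by
  have f0 : ∀ x : ℕ, (x.factorial : ℚ) ≠ 0 := fun x => Nat.cast_ne_zero.mpr x.factorial_ne_zero
  have e1 : ((m+n).choose m : ℚ) = (m+n).factorial / (m.factorial * n.factorial) := by
    rw [Nat.cast_choose ℚ (by omega), show m+n-m = n from by omega]
  have e2 : ((m+n+(q+(β+2*P))).choose (q+(β+2*P)) : ℚ) =
      (m+n+(q+(β+2*P))).factorial / ((q+(β+2*P)).factorial * (m+n).factorial) := by
    rw [Nat.cast_choose ℚ (by omega), show m+n+(q+(β+2*P))-(q+(β+2*P)) = m+n from by omega]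
  have e3 : ((q+(β+2*P)).choose (β+2*P) : ℚ) =
      (q+(β+2*P)).factorial / ((β+2*P).factorial * q.factorial) := by
    rw [Nat.cast_choose ℚ (by omega), show q+(β+2*P)-(β+2*P) = q from by omega]
  have e4 : ((β+2*P).choose (2*P) : ℚ) =
      (β+2*P).factorial / ((2*P).factorial * β.factorial) := by
    rw [Nat.cast_choose ℚ (by omega), show β+2*P-2*P = β from by omega]
  rw [e1, e2, e3, e4]
  field_simp

lemma convert (r s : ℚ) (c1 c2 c3 c4 j β e m n : ℕ)
    (hs : r * ((c1 : ℚ) * c2 * c3 * c4 * 2^j * (-1)^β * (-1)^e) = s) :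
    r • ((c1 : Coeffs) * a0^m * b0^n *
        ((c2 : Coeffs) * ((c3 : Coeffs) * (c4 : Coeffs) * 2^j * (-1)^β * (-t0)^e))) =
      s • (MvPolynomial.X 0^m * MvPolynomial.X 1^n * MvPolynomial.X 2^e : Coeffs) := by
  rw [MvPolynomial.smul_eq_C_mul, MvPolynomial.smul_eq_C_mul, ← hs]
  rw [neg_pow t0 e]
  simp only [map_mul, map_pow, map_natCast, map_neg, map_one, map_ofNat]
  rw [a0, b0, t0]
  ring

end Aux


theorem stmt_19 (p p' m n : ℕ) (hpp' : p ≤ p') :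
    MvPowerSeries.coeff (σ := Fin 4) (R := Coeffs)
        (Finsupp.single (0 : Fin 4) (2 * p') + Finsupp.single 1 (2 * p) +
          Finsupp.single 2 (m + (p' - p)) + Finsupp.single 3 (n + (p' - p))) Z
      = (∑ β ∈ Finset.range (p + 1),
            ((-1 : ℚ) ^ (p' - p + β) * 2 ^ (2 * p - 2 * β) *
              (Nat.factorial (m + n + p' + p - β) : ℚ) /
              ((Nat.factorial (m + n) : ℚ) * (Nat.factorial m : ℚ) * (Nat.factorial n : ℚ) *
                (Nat.factorial (2 * p - 2 * β) : ℚ) * (Nat.factorial β : ℚ) *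
                (Nat.factorial (p' - p) : ℚ)))) •
          (MvPolynomial.X 0 ^ m * MvPolynomial.X 1 ^ n *
            MvPolynomial.X 2 ^ (p' - p) : Coeffs) := by
  obtain ⟨q, rfl⟩ : ∃ q, p' = p + q := ⟨p' - p, by omega⟩
  rw [show p + q - p = q from by omega]
  have hidx : Finsupp.single (0 : Fin 4) (2 * (p+q)) + Finsupp.single 1 (2 * p) +
      Finsupp.single 2 (m + q) + Finsupp.single 3 (n + q) =
        Aux.dg (2*(p+q)) (2*p) (m+q) (n+q) := rfl
  rw [hidx, Aux.coeff_Z, Aux.degree_dg]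
  rw [Finset.sum_congr rfl
    (fun μ _ => by rw [Aux.coeff_Emu_geo p q m n μ, smul_ite, smul_zero])]
  rw [Finset.sum_ite_eq' _ (m+n), if_pos (Finset.mem_range.mpr (by omega))]
  rw [Finset.sum_smul, Finset.mul_sum, Finset.smul_sum]
  apply Finset.sum_congr rfl
  intro β hβ
  rw [Finset.mem_range] at hβ
  rw [show 2*p+q-β = q+(β+2*(p-β)) from by omega,
    show 2*p-β = β+2*(p-β) from by omega,
    show 2*p-2*β = 2*(p-β) from by omega,
    show m+n+(p+q)+p-β = m+n+(q+(β+2*(p-β))) from by omega]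
  apply Aux.convert
  have h := Aux.chooseID m n q β (p-β)
  calc ((m+n).factorial : ℚ)⁻¹ *
        (((m+n).choose m : ℚ) * ((m+n+(q+(β+2*(p-β)))).choose (q+(β+2*(p-β))) : ℚ) *
          ((q+(β+2*(p-β))).choose (β+2*(p-β)) : ℚ) * ((β+2*(p-β)).choose (2*(p-β)) : ℚ) *
          2^(2*(p-β)) * (-1)^β * (-1)^q)
      = ((((m+n).choose m : ℚ) * ((m+n+(q+(β+2*(p-β)))).choose (q+(β+2*(p-β))) : ℚ) *
          ((q+(β+2*(p-β))).choose (β+2*(p-β)) : ℚ) * ((β+2*(p-β)).choose (2*(p-β)) : ℚ)) /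
            (m+n).factorial) * (2^(2*(p-β)) * (-1)^β * (-1)^q) := by
        ring
    _ = (((m+n+(q+(β+2*(p-β)))).factorial : ℚ) /
          (((m+n).factorial : ℚ) * m.factorial * n.factorial * (2*(p-β)).factorial *
            β.factorial * q.factorial)) * (2^(2*(p-β)) * (-1)^β * (-1)^q) := by
        rw [h]
    _ = (-1 : ℚ) ^ (q + β) * 2 ^ (2*(p-β)) *
          ((m+n+(q+(β+2*(p-β)))).factorial : ℚ) /
          (((m+n).factorial : ℚ) * m.factorial * n.factorial * (2*(p-β)).factorial *
            β.factorial * q.factorial) := by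
        rw [pow_add]
        ring
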